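/- arXiv:0707.0400 — 3 statements merged into one kernel-verified Lean document; each statement's English description precedes it below -/
import Mathlib

section
/- Let n ≥ 3, let i, j ∈ {1,…,n−1} with |i−j| = 1, and let a ≥ 1. Then in the singular Hecke algebra H(SB_n): τ_i^a (σ_iσ_j + σ_jσ_i − (q−1)σ_i − (q−1)σ_j + (q²−q+1)) = τ_j^a (σ_iσ_j + σ_jσ_i − (q−1)σ_i − (q−1)σ_j + (q²−q+1)). -/
noncomputable section
open scoped Classical

/-- `𝕂 = ℂ(q)`. -/
abbrev K : Type := RatFunc ℂ
/-- `𝕂(z)`. -/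
abbrev Kz : Type := RatFunc K
/-- the variable `q`. -/
def q : K := RatFunc.X
/-- the variable `z`. -/
def z : Kz := RatFunc.X

/-- Generators of the singular braid monoid on `n` strands:
`s i` is `σ_{i+1}`, `si i` is `σ_{i+1}⁻¹`, `t i` is `τ_{i+1}` (0-indexed `i`). -/
inductive SBGen (n : ℕ) : Type
  | s (i : Fin (n - 1))
  | si (i : Fin (n - 1))
  | t (i : Fin (n - 1))

/-- `|i - j| = 1`. -/
def adj {n : ℕ} (i j : Fin (n - 1)) : Prop := (i : ℕ) + 1 = (j : ℕ) ∨ (j : ℕ) + 1 = (i : ℕ)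
/-- `|i - j| ≥ 2`. -/
def far {n : ℕ} (i j : Fin (n - 1)) : Prop := (i : ℕ) + 2 ≤ (j : ℕ) ∨ (j : ℕ) + 2 ≤ (i : ℕ)

open FreeMonoid in
/-- The defining relations of the singular braid monoid. -/
inductive SBRel (n : ℕ) : FreeMonoid (SBGen n) → FreeMonoid (SBGen n) → Prop
  | inv_right (i) : SBRel n (of (.s i) * of (.si i)) 1
  | inv_left (i) : SBRel n (of (.si i) * of (.s i)) 1
  | sigma_tau (i) : SBRel n (of (.s i) * of (.t i)) (of (.t i) * of (.s i))
  | braid (i j) : adj i j →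
      SBRel n (of (.s i) * of (.s j) * of (.s i)) (of (.s j) * of (.s i) * of (.s j))
  | braid_tau (i j) : adj i j →
      SBRel n (of (.s i) * of (.s j) * of (.t i)) (of (.t j) * of (.s i) * of (.s j))
  | ss_comm (i j) : far i j → SBRel n (of (.s i) * of (.s j)) (of (.s j) * of (.s i))
  | st_comm (i j) : far i j → SBRel n (of (.s i) * of (.t j)) (of (.t j) * of (.s i))
  | tt_comm (i j) : far i j → SBRel n (of (.t i) * of (.t j)) (of (.t j) * of (.t i))

/-- The congruence generated by the singular braid relations. -/
def SBcon (n : ℕ) : Con (FreeMonoid (SBGen n)) := conGen (SBRel n)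

/-- The singular braid monoid `SB_n`. -/
def SB (n : ℕ) : Type := (SBcon n).Quotient

instance (n : ℕ) : Monoid (SB n) := Con.monoid _

/-- The generator `σ_{i+1}` of `SB_n`. -/
def sσ {n : ℕ} (i : Fin (n - 1)) : SB n := (SBcon n).mk' (FreeMonoid.of (.s i))
/-- The generator `σ_{i+1}⁻¹` of `SB_n`. -/
def sσi {n : ℕ} (i : Fin (n - 1)) : SB n := (SBcon n).mk' (FreeMonoid.of (.si i))
/-- The generator `τ_{i+1}` of `SB_n`. -/
def sτ {n : ℕ} (i : Fin (n - 1)) : SB n := (SBcon n).mk' (FreeMonoid.of (.t i))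

/-- Number of singular points of a generator. -/
def genDeg {n : ℕ} : SBGen n → Multiplicative ℕ
  | .t _ => Multiplicative.ofAdd 1
  | _ => 1

/-- Number of singular points of a word. -/
def degF (n : ℕ) : FreeMonoid (SBGen n) →* Multiplicative ℕ := FreeMonoid.lift genDeg

lemma degF_rel {n : ℕ} : SBcon n ≤ Con.ker (degF n) := by
  refine Con.conGen_le.mpr ?_
  rintro x y h
  rw [Con.ker_rel]
  cases h <;>
    simp [degF, genDeg, mul_comm]

/-- The number of singular points, as a monoid homomorphism. -/
def deg {n : ℕ} : SB n →* Multiplicative ℕ := Con.lift _ (degF n) degF_rel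

/-- The number of singular points of a singular braid. -/
def ndeg {n : ℕ} (β : SB n) : ℕ := Multiplicative.toAdd (deg β)

/-- `S_d B_n` : the set of singular braids on `n` strands with `d` singular points. -/
def SdB (d n : ℕ) : Set (SB n) := {β | ndeg β = d}

lemma ndeg_mul {n : ℕ} (α β : SB n) : ndeg (α * β) = ndeg α + ndeg β := by
  simp [ndeg, map_mul]

lemma ndeg_one {n : ℕ} : ndeg (1 : SB n) = 0 := by simp [ndeg]

lemma ndeg_pow {n : ℕ} (β : SB n) (m : ℕ) : ndeg (β ^ m) = m * ndeg β := by
  induction m with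
  | zero => simp [ndeg_one]
  | succ m ih => rw [pow_succ, ndeg_mul, ih]; ring

lemma ndeg_sσ {n : ℕ} (i : Fin (n - 1)) : ndeg (sσ i) = 0 := rfl

lemma ndeg_sσi {n : ℕ} (i : Fin (n - 1)) : ndeg (sσi i) = 0 := by
  rfl

lemma ndeg_sτ {n : ℕ} (i : Fin (n - 1)) : ndeg (sτ i) = 1 := by
  rfl

lemma mem_SdB {n d : ℕ} {β : SB n} (h : ndeg β = d) : β ∈ SdB d n := h
/-- The monoid algebra `𝕂[SB_n]`. -/
abbrev MA (n : ℕ) : Type := MonoidAlgebra K (SB n)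

/-- The Hecke relations `σ_k² = (q-1)σ_k + q`. -/
def hrel (n : ℕ) : MA n → MA n → Prop := fun x y =>
  ∃ i : Fin (n - 1), x = (MonoidAlgebra.of K (SB n) (sσ i)) ^ 2 ∧
    y = (q - 1) • MonoidAlgebra.of K (SB n) (sσ i) + q • 1

/-- The singular Hecke algebra `H(SB_n)`. -/
def H (n : ℕ) : Type := RingQuot (hrel n)

instance (n : ℕ) : Ring (H n) := inferInstanceAs (Ring (RingQuot (hrel n)))
instance (n : ℕ) : Algebra K (H n) := inferInstanceAs (Algebra K (RingQuot (hrel n)))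

/-- The natural map `SB_n → H(SB_n)`. -/
def ιH {n : ℕ} (β : SB n) : H n := RingQuot.mkAlgHom K (hrel n) (MonoidAlgebra.of K (SB n) β)

/-- The image of `σ_{i+1}` in the singular Hecke algebra. -/
def σH {n : ℕ} (i : Fin (n - 1)) : H n := ιH (sσ i)
/-- The image of `τ_{i+1}` in the singular Hecke algebra. -/
def τH {n : ℕ} (i : Fin (n - 1)) : H n := ιH (sτ i)

/-- Scalars inside the singular Hecke algebra. -/
def cK {n : ℕ} (c : K) : H n := algebraMap K (H n) c

/-- `H(S_d B_n)` : the 𝕂-subspace of `H(SB_n)` spanned by the braids with `d` singular points. -/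
def HSd (d n : ℕ) : Submodule K (H n) := Submodule.span K (ιH '' SdB d n)

lemma ιH_mem {n d : ℕ} {β : SB n} (h : β ∈ SdB d n) : ιH β ∈ HSd d n :=
  Submodule.subset_span ⟨β, h, rfl⟩

/-- Map on generators realizing the inclusion `SB_n ↪ SB_{n+1}`. -/
def genMap {n : ℕ} : SBGen n → SBGen (n + 1)
  | .s i => .s (Fin.castLE (by omega) i)
  | .si i => .si (Fin.castLE (by omega) i)
  | .t i => .t (Fin.castLE (by omega) i)

lemma incl_wd {n : ℕ} :
    SBcon n ≤ Con.ker ((SBcon (n + 1)).mk'.comp (FreeMonoid.map genMap)) := by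
  refine Con.conGen_le.mpr ?_
  rintro x y h
  rw [Con.ker_rel]
  cases h with
  | inv_right i => exact (Con.eq _).mpr (ConGen.Rel.of _ _ (SBRel.inv_right _))
  | inv_left i => exact (Con.eq _).mpr (ConGen.Rel.of _ _ (SBRel.inv_left _))
  | sigma_tau i => exact (Con.eq _).mpr (ConGen.Rel.of _ _ (SBRel.sigma_tau _))
  | braid i j hij =>
      refine (Con.eq _).mpr (ConGen.Rel.of _ _ (SBRel.braid _ _ ?_))
      simpa [adj] using hij
  | braid_tau i j hij =>
      refine (Con.eq _).mpr (ConGen.Rel.of _ _ (SBRel.braid_tau _ _ ?_))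
      simpa [adj] using hij
  | ss_comm i j hij =>
      refine (Con.eq _).mpr (ConGen.Rel.of _ _ (SBRel.ss_comm _ _ ?_))
      simpa [far] using hij
  | st_comm i j hij =>
      refine (Con.eq _).mpr (ConGen.Rel.of _ _ (SBRel.st_comm _ _ ?_))
      simpa [far] using hij
  | tt_comm i j hij =>
      refine (Con.eq _).mpr (ConGen.Rel.of _ _ (SBRel.tt_comm _ _ ?_))
      simpa [far] using hij

/-- The natural monoid homomorphism `SB_n → SB_{n+1}`. -/
def incl {n : ℕ} : SB n →* SB (n + 1) :=
  Con.lift _ ((SBcon (n + 1)).mk'.comp (FreeMonoid.map genMap)) incl_wd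

lemma degF_genMap {n : ℕ} (w : FreeMonoid (SBGen n)) :
    degF (n + 1) (FreeMonoid.map genMap w) = degF n w := by
  change ((degF (n+1)).comp (FreeMonoid.map genMap)) w = degF n w
  refine DFunLike.congr_fun (FreeMonoid.hom_eq fun a => ?_) w
  cases a <;> rfl

lemma ndeg_incl {n : ℕ} (β : SB n) : ndeg (incl β) = ndeg β := by
  induction β using Con.induction_on with
  | H w =>
    show Multiplicative.toAdd (degF (n + 1) (FreeMonoid.map genMap w)) =
      Multiplicative.toAdd (degF n w)
    rw [degF_genMap]

/-- The generator `σ_n` of `SB_{n+2}` (0-indexed `n`), used in the Markov condition. -/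
def lastGen (n : ℕ) : Fin ((n + 2) - 1) := ⟨n, by omega⟩

/-- A collection of 𝕂-linear maps `H(S_d B_n) → 𝕂(z)`, `n ≥ 1`
(index `n` in the collection corresponds to `n+1` strands). -/
abbrev TRc (d : ℕ) : Type := ∀ n : ℕ, HSd d (n + 1) →ₗ[K] Kz

/-- The Markov trace conditions. -/
def IsMarkov (d : ℕ) (T : TRc d) : Prop :=
  (∀ (n k l : ℕ) (α β : SB (n + 1)), α ∈ SdB k (n + 1) → β ∈ SdB l (n + 1) → k + l = d →
    ∀ (h₁ : ιH (α * β) ∈ HSd d (n + 1)) (h₂ : ιH (β * α) ∈ HSd d (n + 1)),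
      T n ⟨ιH (α * β), h₁⟩ = T n ⟨ιH (β * α), h₂⟩) ∧
  (∀ (n : ℕ) (β : SB (n + 1)), β ∈ SdB d (n + 1) →
    ∀ (h₁ : ιH (incl β) ∈ HSd d (n + 2)) (h₂ : ιH β ∈ HSd d (n + 1)),
      T (n + 1) ⟨ιH (incl β), h₁⟩ = T n ⟨ιH β, h₂⟩) ∧
  (∀ (n : ℕ) (β : SB (n + 1)), β ∈ SdB d (n + 1) →
    ∀ (h₁ : ιH (incl β * sσ (lastGen n)) ∈ HSd d (n + 2)) (h₂ : ιH β ∈ HSd d (n + 1)),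
      T (n + 1) ⟨ιH (incl β * sσ (lastGen n)), h₁⟩ = z * T n ⟨ιH β, h₂⟩)

/-- `TR_d` : the 𝕂(z)-vector space of Markov traces on `{H(S_d B_n)}ₙ`. -/
def TR (d : ℕ) : Submodule Kz (TRc d) where
  carrier := {T | IsMarkov d T}
  add_mem' := by
    rintro a b ⟨ha1, ha2, ha3⟩ ⟨hb1, hb2, hb3⟩
    refine ⟨?_, ?_, ?_⟩
    · intro n k l α β hα hβ hkl h₁ h₂
      simp only [Pi.add_apply, LinearMap.add_apply,
        ha1 n k l α β hα hβ hkl h₁ h₂, hb1 n k l α β hα hβ hkl h₁ h₂]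
    · intro n β hβ h₁ h₂
      simp only [Pi.add_apply, LinearMap.add_apply, ha2 n β hβ h₁ h₂, hb2 n β hβ h₁ h₂]
    · intro n β hβ h₁ h₂
      simp only [Pi.add_apply, LinearMap.add_apply, ha3 n β hβ h₁ h₂, hb3 n β hβ h₁ h₂]
      ring
  zero_mem' := by
    refine ⟨?_, ?_, ?_⟩ <;> intros <;> simp
  smul_mem' := by
    rintro c a ⟨ha1, ha2, ha3⟩
    refine ⟨?_, ?_, ?_⟩
    · intro n k l α β hα hβ hkl h₁ h₂
      simp only [Pi.smul_apply, LinearMap.smul_apply, ha1 n k l α β hα hβ hkl h₁ h₂]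
    · intro n β hβ h₁ h₂
      simp only [Pi.smul_apply, LinearMap.smul_apply, ha2 n β hβ h₁ h₂]
    · intro n β hβ h₁ h₂
      simp only [Pi.smul_apply, LinearMap.smul_apply, ha3 n β hβ h₁ h₂, smul_eq_mul]
      ring

lemma ndeg_list_prod {n : ℕ} (l : List (SB n)) : ndeg l.prod = (l.map ndeg).sum := by
  induction l with
  | nil => simpa using ndeg_one
  | cons a l ih => simp [ndeg_mul, ih]

lemma mem_expr {m d : ℕ} (α : Fin (d + 1) → SB m) (hα : ∀ j, α j ∈ SdB 0 m)
    (idx : Fin d → Fin (m - 1)) :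
    (α 0 * (List.ofFn fun j : Fin d => sτ (idx j) * α j.succ).prod) ∈ SdB d m := by
  refine mem_SdB ?_
  rw [ndeg_mul, ndeg_list_prod, List.map_ofFn, hα 0]
  have h : (fun j : Fin d => ndeg (sτ (idx j) * α j.succ)) = fun _ => 1 := by
    funext j; rw [ndeg_mul, ndeg_sτ, hα j.succ]
  rw [show ndeg ∘ (fun j : Fin d => sτ (idx j) * α j.succ)
      = fun j : Fin d => ndeg (sτ (idx j) * α j.succ) from rfl, h]
  simp

lemma mem_exprS {m d : ℕ} (α : Fin (d + 1) → SB m) (hα : ∀ j, α j ∈ SdB 0 m)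
    (idx : Fin d → Fin (m - 1)) (S : Finset (Fin d)) :
    (α 0 * (List.ofFn fun j : Fin d =>
      (if j ∈ S then sσ (idx j) else 1) * α j.succ).prod) ∈ SdB 0 m := by
  refine mem_SdB ?_
  rw [ndeg_mul, ndeg_list_prod, List.map_ofFn, hα 0]
  have h : (fun j : Fin d => ndeg ((if j ∈ S then sσ (idx j) else 1) * α j.succ))
      = fun _ => 0 := by
    funext j
    rw [ndeg_mul, hα j.succ]
    split <;> simp [ndeg_sσ, ndeg_one]
  rw [show ndeg ∘ (fun j : Fin d => (if j ∈ S then sσ (idx j) else 1) * α j.succ)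
      = fun j : Fin d => ndeg ((if j ∈ S then sσ (idx j) else 1) * α j.succ) from rfl, h]
  simp

lemma mem_tau_pow {n : ℕ} (i : Fin (n - 1)) (d : ℕ) : (sτ i) ^ d ∈ SdB d n := by
  refine mem_SdB ?_; simp [ndeg_pow, ndeg_sτ]

lemma mem_tau_pow_sigma {n : ℕ} (i i' : Fin (n - 1)) (d : ℕ) :
    (sτ i) ^ d * sσ i' ∈ SdB d n := by
  refine mem_SdB ?_; simp [ndeg_mul, ndeg_pow, ndeg_sτ, ndeg_sσ]

lemma mem_tau_tau {n : ℕ} (i i' : Fin (n - 1)) (a b : ℕ) :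
    (sτ i) ^ a * (sτ i') ^ b ∈ SdB (a + b) n := by
  refine mem_SdB ?_; simp [ndeg_mul, ndeg_pow, ndeg_sτ]

lemma mem_tau_tau_sigma {n : ℕ} (i i' i'' : Fin (n - 1)) (a b : ℕ) :
    (sτ i) ^ a * (sτ i') ^ b * sσ i'' ∈ SdB (a + b) n := by
  refine mem_SdB ?_; simp [ndeg_mul, ndeg_pow, ndeg_sτ, ndeg_sσ]

/-- `σ_{i+1}` with out-of-range indices interpreted as `1`. -/
def sσ' (n : ℕ) (i : ℕ) : SB n := if h : i < n - 1 then sσ ⟨i, h⟩ else 1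

/-- `descChain n m = σ_{n-1} σ_{n-2} ⋯ σ_{n-m}` (1-indexed), `m` letters. -/
def descChain (n : ℕ) : ℕ → SB n
  | 0 => 1
  | m + 1 => descChain n m * sσ' n (n - 2 - m)

/-- The sets `ℬ_n` describing the standard basis of the Hecke algebra `H(B_n)`:
`ℬ_1 = {1}` and `ℬ_n = {β u : β ∈ ℬ_{n-1}, u ∈ U_n}` where
`U_n = {1, σ_{n-1}, σ_{n-1}σ_{n-2}, …, σ_{n-1}⋯σ_1}`. -/
def Bset : (n : ℕ) → Set (SB n)
  | 0 => {1}
  | n + 1 => {x | ∃ β ∈ Bset n, ∃ m ≤ n, x = incl β * descChain (n + 1) m}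

/-- The set `𝒞_{d,n}` of singular braids of the form `τ_{i_1} ⋯ τ_{i_d} β` with `β ∈ ℬ_n`. -/
def Cdn (d n : ℕ) : Set (SB n) :=
  {x | ∃ idx : Fin d → Fin (n - 1), ∃ β ∈ Bset n,
    x = (List.ofFn fun j : Fin d => sτ (idx j)).prod * β}

set_option maxHeartbeats 4000000 in
lemma statement7_gen_key₁ {F : Type} [Field F] {A : Type} [Ring A] [Algebra F A]
    (p : F) (x y s t : A)
    (h1 : x * s = s * x) (h2 : y * t = t * y)
    (h3 : x * y * s = t * (x * y)) (h4 : y * x * t = s * (y * x))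
    (h5 : x * x = (p - 1) • x + p • (1 : A)) (h6 : y * y = (p - 1) • y + p • (1 : A))
    (h7 : x * y * x = y * x * y) (hp : p ≠ 0) (hp1 : p - 1 ≠ 0) :
    s * (x * y + y * x - (p - 1) • x - (p - 1) • y + (p * p - p + 1) • (1 : A))
      = t * (x * y + y * x - (p - 1) • x - (p - 1) • y + (p * p - p + 1) • (1 : A)) := by
  have z1 : x * s - s * x = (0 : A) := sub_eq_zero.mpr h1
  have z2 : y * t - t * y = (0 : A) := sub_eq_zero.mpr h2
  have z3 : x * y * s - t * (x * y) = (0 : A) := sub_eq_zero.mpr h3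
  have z4 : y * x * t - s * (y * x) = (0 : A) := sub_eq_zero.mpr h4
  have z5 : x * x - ((p - 1) • x + p • (1 : A)) = (0 : A) := sub_eq_zero.mpr h5
  have z6 : y * y - ((p - 1) • y + p • (1 : A)) = (0 : A) := sub_eq_zero.mpr h6
  have z7 : x * y * x - y * x * y = (0 : A) := sub_eq_zero.mpr h7
  have hD : (p * p * (p - 1) * (p - 1)) ≠ 0 := mul_ne_zero (mul_ne_zero (mul_ne_zero hp hp) hp1) hp1
  have cert : (p * p * (p - 1) * (p - 1)) • (s * (x * y + y * x - (p - 1) • x - (p - 1) • y + (p * p - p + 1) • (1 : A)) - t * (x * y + y * x - (p - 1) • x - (p - 1) • y + (p * p - p + 1) • (1 : A))) =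
      ((-1 : F)*p*p + (3 : F)*p*p*p + (-3 : F)*p*p*p*p + (1 : F)*p*p*p*p*p) • ((x * s - s * x))
      + ((-1 : F)*p*p + (2 : F)*p*p*p + (-1 : F)*p*p*p*p) • ((x * s - s * x) * y)
      + ((1 : F) + (-4 : F)*p + (7 : F)*p*p + (-7 : F)*p*p*p + (4 : F)*p*p*p*p + (-1 : F)*p*p*p*p*p) • (x * y * (x * s - s * x))
      + ((1 : F) + (-3 : F)*p + (4 : F)*p*p + (-3 : F)*p*p*p + (1 : F)*p*p*p*p) • (x * x * y * (x * s - s * x))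
      + ((1 : F) + (-3 : F)*p + (4 : F)*p*p + (-3 : F)*p*p*p + (1 : F)*p*p*p*p) • (y * x * y * (x * s - s * x))
      + ((1 : F) + (-2 : F)*p + (2 : F)*p*p + (-1 : F)*p*p*p) • (y * x * x * y * (x * s - s * x))
      + ((1 : F)*p*p + (-3 : F)*p*p*p + (3 : F)*p*p*p*p + (-1 : F)*p*p*p*p*p) • ((y * t - t * y))
      + ((1 : F)*p*p + (-2 : F)*p*p*p + (1 : F)*p*p*p*p) • ((y * t - t * y) * x)
      + ((1 : F)*p + (-3 : F)*p*p + (3 : F)*p*p*p + (-1 : F)*p*p*p*p) • ((y * t - t * y) * x * y)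
      + ((1 : F)*p + (-2 : F)*p*p + (1 : F)*p*p*p) • ((y * t - t * y) * y * x * y)
      + ((1 : F)*p + (-2 : F)*p*p + (1 : F)*p*p*p) • (x * (y * t - t * y) * x * y)
      + ((1 : F)*p + (-1 : F)*p*p) • (x * (y * t - t * y) * y * x * y)
      + ((1 : F)*p + (-2 : F)*p*p + (1 : F)*p*p*p) • (y * (y * t - t * y) * x * y)
      + ((1 : F)*p + (-1 : F)*p*p) • (x * y * (y * t - t * y) * x * y)
      + ((1 : F)*p + (-3 : F)*p*p + (3 : F)*p*p*p + (-1 : F)*p*p*p*p) • (y * x * (y * t - t * y))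
      + ((1 : F)*p + (-2 : F)*p*p + (1 : F)*p*p*p) • (x * y * x * (y * t - t * y))
      + ((1 : F)*p + (-2 : F)*p*p + (1 : F)*p*p*p) • (y * y * x * (y * t - t * y))
      + ((1 : F)*p + (-1 : F)*p*p) • (x * y * y * x * (y * t - t * y))
      + ((1 : F) + (-4 : F)*p + (7 : F)*p*p + (-9 : F)*p*p*p + (7 : F)*p*p*p*p + (-4 : F)*p*p*p*p*p + (1 : F)*p*p*p*p*p*p) • ((x * y * s - t * (x * y)))
      + ((1 : F) + (-4 : F)*p + (7 : F)*p*p + (-7 : F)*p*p*p + (4 : F)*p*p*p*p + (-1 : F)*p*p*p*p*p) • ((x * y * s - t * (x * y)) * x)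
      + ((1 : F) + (-3 : F)*p + (5 : F)*p*p + (-5 : F)*p*p*p + (3 : F)*p*p*p*p + (-1 : F)*p*p*p*p*p) • ((x * y * s - t * (x * y)) * y)
      + ((1 : F) + (-3 : F)*p + (4 : F)*p*p + (-3 : F)*p*p*p + (1 : F)*p*p*p*p) • ((x * y * s - t * (x * y)) * y * x)
      + ((1 : F)*p*p) • ((x * y * s - t * (x * y)) * y * y)
      + ((1 : F) + (-3 : F)*p + (4 : F)*p*p + (-4 : F)*p*p*p + (3 : F)*p*p*p*p + (-1 : F)*p*p*p*p*p) • (x * (x * y * s - t * (x * y)))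
      + ((1 : F) + (-3 : F)*p + (4 : F)*p*p + (-3 : F)*p*p*p + (1 : F)*p*p*p*p) • (x * (x * y * s - t * (x * y)) * x)
      + ((1 : F) + (-2 : F)*p + (3 : F)*p*p + (-2 : F)*p*p*p + (1 : F)*p*p*p*p) • (x * (x * y * s - t * (x * y)) * y)
      + ((1 : F) + (-2 : F)*p + (2 : F)*p*p + (-1 : F)*p*p*p) • (x * (x * y * s - t * (x * y)) * y * x)
      + ((1 : F) + (-2 : F)*p + (1 : F)*p*p + (-1 : F)*p*p*p + (2 : F)*p*p*p*p + (-1 : F)*p*p*p*p*p) • (y * (x * y * s - t * (x * y)))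
      + ((1 : F) + (-3 : F)*p + (4 : F)*p*p + (-3 : F)*p*p*p + (1 : F)*p*p*p*p) • (y * (x * y * s - t * (x * y)) * x)
      + ((1 : F) + (-2 : F)*p + (2 : F)*p*p + (-2 : F)*p*p*p + (1 : F)*p*p*p*p) • (y * (x * y * s - t * (x * y)) * y)
      + ((1 : F) + (-2 : F)*p + (2 : F)*p*p + (-1 : F)*p*p*p) • (y * (x * y * s - t * (x * y)) * y * x)
      + ((1 : F)*p + (-2 : F)*p*p + (1 : F)*p*p*p) • (x * y * (x * y * s - t * (x * y)))
      + ((1 : F) + (-1 : F)*p + (-1 : F)*p*p*p + (1 : F)*p*p*p*p) • (y * x * (x * y * s - t * (x * y)))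
      + ((1 : F) + (-2 : F)*p + (2 : F)*p*p + (-1 : F)*p*p*p) • (y * x * (x * y * s - t * (x * y)) * x)
      + ((1 : F) + (-1 : F)*p + (1 : F)*p*p + (-1 : F)*p*p*p) • (y * x * (x * y * s - t * (x * y)) * y)
      + ((1 : F) + (-1 : F)*p + (1 : F)*p*p) • (y * x * (x * y * s - t * (x * y)) * y * x)
      + ((1 : F)*p + (-2 : F)*p*p + (1 : F)*p*p*p) • (y * y * (x * y * s - t * (x * y)))
      + ((1 : F)*p + (-1 : F)*p*p) • (x * y * x * (x * y * s - t * (x * y)))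
      + ((1 : F)*p + (-1 : F)*p*p) • (x * y * y * (x * y * s - t * (x * y)))
      + ((1 : F)*p + (-1 : F)*p*p) • (y * y * x * (x * y * s - t * (x * y)))
      + ((1 : F)*p) • (x * y * y * x * (x * y * s - t * (x * y)))
      + ((-2 : F)*p*p + (3 : F)*p*p*p + (-2 : F)*p*p*p*p) • ((y * x * t - s * (y * x)))
      + ((1 : F) + (-2 : F)*p + (1 : F)*p*p + (-1 : F)*p*p*p + (2 : F)*p*p*p*p + (-1 : F)*p*p*p*p*p) • ((y * x * t - s * (y * x)) * y)
      + ((1 : F) + (-1 : F)*p + (-1 : F)*p*p*p + (1 : F)*p*p*p*p) • ((y * x * t - s * (y * x)) * x * y)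
      + ((1 : F) + (-3 : F)*p + (4 : F)*p*p + (-3 : F)*p*p*p + (1 : F)*p*p*p*p) • ((y * x * t - s * (y * x)) * y * x)
      + ((1 : F) + (-2 : F)*p + (2 : F)*p*p + (-2 : F)*p*p*p + (1 : F)*p*p*p*p) • ((y * x * t - s * (y * x)) * y * y)
      + ((1 : F) + (-2 : F)*p + (2 : F)*p*p + (-1 : F)*p*p*p) • ((y * x * t - s * (y * x)) * x * y * x)
      + ((1 : F) + (-1 : F)*p + (1 : F)*p*p + (-1 : F)*p*p*p) • ((y * x * t - s * (y * x)) * x * y * y)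
      + ((1 : F) + (-2 : F)*p + (2 : F)*p*p + (-1 : F)*p*p*p) • ((y * x * t - s * (y * x)) * y * y * x)
      + ((1 : F) + (-1 : F)*p + (1 : F)*p*p) • ((y * x * t - s * (y * x)) * x * y * y * x)
      + ((1 : F)*p + (-2 : F)*p*p + (1 : F)*p*p*p) • (x * (y * x * t - s * (y * x)) * y)
      + ((1 : F)*p + (-1 : F)*p*p) • (x * (y * x * t - s * (y * x)) * x * y)
      + ((1 : F)*p + (-2 : F)*p*p + (2 : F)*p*p*p + (-1 : F)*p*p*p*p) • (y * (y * x * t - s * (y * x)))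
      + ((1 : F)*p + (-1 : F)*p*p + (1 : F)*p*p*p) • (y * (y * x * t - s * (y * x)) * x)
      + ((1 : F)*p + (-2 : F)*p*p + (1 : F)*p*p*p) • (y * (y * x * t - s * (y * x)) * y)
      + ((1 : F)*p + (-1 : F)*p*p) • (y * (y * x * t - s * (y * x)) * x * y)
      + ((1 : F) + (-3 : F)*p + (4 : F)*p*p + (-3 : F)*p*p*p + (1 : F)*p*p*p*p) • (x * y * (y * x * t - s * (y * x)))
      + ((1 : F)*p + (-1 : F)*p*p) • (x * y * (y * x * t - s * (y * x)) * y)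
      + ((1 : F)*p) • (x * y * (y * x * t - s * (y * x)) * x * y)
      + ((1 : F) + (-2 : F)*p + (2 : F)*p*p + (-1 : F)*p*p*p) • (x * x * y * (y * x * t - s * (y * x)))
      + ((1 : F) + (-2 : F)*p + (2 : F)*p*p + (-1 : F)*p*p*p) • (y * x * y * (y * x * t - s * (y * x)))
      + ((1 : F) + (-1 : F)*p + (1 : F)*p*p) • (y * x * x * y * (y * x * t - s * (y * x)))
      + ((1 : F)*p + (-3 : F)*p*p + (4 : F)*p*p*p + (-3 : F)*p*p*p*p + (1 : F)*p*p*p*p*p) • (t * (x * x - ((p - 1) • x + p • (1 : A))))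
      + ((1 : F)*p + (-2 : F)*p*p + (2 : F)*p*p*p + (-1 : F)*p*p*p*p) • (x * t * (x * x - ((p - 1) • x + p • (1 : A))))
      + ((1 : F)*p + (-2 : F)*p*p + (2 : F)*p*p*p + (-1 : F)*p*p*p*p) • (y * t * (x * x - ((p - 1) • x + p • (1 : A))))
      + ((1 : F) + (-1 : F)*p + (-1 : F)*p*p*p + (1 : F)*p*p*p*p) • (s * y * (x * x - ((p - 1) • x + p • (1 : A))) * y)
      + ((1 : F) + (-2 : F)*p + (2 : F)*p*p + (-1 : F)*p*p*p) • (s * y * (x * x - ((p - 1) • x + p • (1 : A))) * y * x)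
      + ((1 : F) + (-1 : F)*p + (1 : F)*p*p + (-1 : F)*p*p*p) • (s * y * (x * x - ((p - 1) • x + p • (1 : A))) * y * y)
      + ((1 : F) + (-1 : F)*p + (1 : F)*p*p) • (s * y * (x * x - ((p - 1) • x + p • (1 : A))) * y * y * x)
      + ((1 : F)*p + (-1 : F)*p*p) • (x * s * y * (x * x - ((p - 1) • x + p • (1 : A))) * y)
      + ((1 : F)*p + (-1 : F)*p*p + (1 : F)*p*p*p) • (y * s * y * (x * x - ((p - 1) • x + p • (1 : A))))
      + ((1 : F)*p + (-1 : F)*p*p) • (y * s * y * (x * x - ((p - 1) • x + p • (1 : A))) * y)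
      + ((1 : F)*p) • (x * y * s * y * (x * x - ((p - 1) • x + p • (1 : A))) * y)
      + ((-1 : F) + (3 : F)*p + (-4 : F)*p*p + (4 : F)*p*p*p + (-3 : F)*p*p*p*p + (1 : F)*p*p*p*p*p) • ((x * x - ((p - 1) • x + p • (1 : A))) * y * s)
      + ((-1 : F)*p*p + (1 : F)*p*p*p) • ((x * x - ((p - 1) • x + p • (1 : A))) * y * t)
      + ((-1 : F) + (3 : F)*p + (-4 : F)*p*p + (3 : F)*p*p*p + (-1 : F)*p*p*p*p) • ((x * x - ((p - 1) • x + p • (1 : A))) * y * x * s)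
      + ((-1 : F) + (2 : F)*p + (-3 : F)*p*p + (2 : F)*p*p*p + (-1 : F)*p*p*p*p) • ((x * x - ((p - 1) • x + p • (1 : A))) * y * s * y)
      + ((-1 : F) + (2 : F)*p + (-2 : F)*p*p + (1 : F)*p*p*p) • ((x * x - ((p - 1) • x + p • (1 : A))) * y * y * x * t)
      + ((-1 : F) + (1 : F)*p + (1 : F)*p*p*p + (-1 : F)*p*p*p*p) • (y * (x * x - ((p - 1) • x + p • (1 : A))) * y * s)
      + ((-1 : F) + (2 : F)*p + (-2 : F)*p*p + (1 : F)*p*p*p) • (y * (x * x - ((p - 1) • x + p • (1 : A))) * y * x * s)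
      + ((-1 : F) + (1 : F)*p + (-1 : F)*p*p + (1 : F)*p*p*p) • (y * (x * x - ((p - 1) • x + p • (1 : A))) * y * s * y)
      + ((-1 : F) + (1 : F)*p + (-1 : F)*p*p) • (y * (x * x - ((p - 1) • x + p • (1 : A))) * y * y * x * t)
      + ((-1 : F)*p + (1 : F)*p*p) • (x * y * (x * x - ((p - 1) • x + p • (1 : A))) * y * s)
      + ((-1 : F)*p + (1 : F)*p*p) • (y * y * (x * x - ((p - 1) • x + p • (1 : A))) * y * s)
      + ((-1 : F)*p) • (x * y * y * (x * x - ((p - 1) • x + p • (1 : A))) * y * s)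
      + ((1 : F)*p*p + (-2 : F)*p*p*p + (1 : F)*p*p*p*p) • (s * (y * y - ((p - 1) • y + p • (1 : A))))
      + ((1 : F)*p + (-1 : F)*p*p + (1 : F)*p*p*p + (-1 : F)*p*p*p*p) • (s * (y * y - ((p - 1) • y + p • (1 : A))) * y)
      + ((1 : F)*p + (-1 : F)*p*p + (1 : F)*p*p*p) • (s * (y * y - ((p - 1) • y + p • (1 : A))) * y * x)
      + ((1 : F)*p + (-2 : F)*p*p + (1 : F)*p*p*p) • (t * (y * y - ((p - 1) • y + p • (1 : A))) * x * y)
      + ((1 : F)*p*p + (-1 : F)*p*p*p) • (x * s * (y * y - ((p - 1) • y + p • (1 : A))))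
      + ((1 : F)*p + (-1 : F)*p*p) • (x * t * (y * y - ((p - 1) • y + p • (1 : A))) * x * y)
      + ((1 : F)*p*p + (-1 : F)*p*p*p) • (y * s * (y * y - ((p - 1) • y + p • (1 : A))))
      + ((1 : F) + (-3 : F)*p + (4 : F)*p*p + (-4 : F)*p*p*p + (3 : F)*p*p*p*p + (-1 : F)*p*p*p*p*p) • (t * x * (y * y - ((p - 1) • y + p • (1 : A))))
      + ((1 : F) + (-3 : F)*p + (4 : F)*p*p + (-3 : F)*p*p*p + (1 : F)*p*p*p*p) • (t * x * (y * y - ((p - 1) • y + p • (1 : A))) * x)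
      + ((1 : F)*p*p) • (t * x * (y * y - ((p - 1) • y + p • (1 : A))) * y)
      + ((1 : F) + (-2 : F)*p + (3 : F)*p*p + (-2 : F)*p*p*p + (1 : F)*p*p*p*p) • (x * t * x * (y * y - ((p - 1) • y + p • (1 : A))))
      + ((1 : F) + (-2 : F)*p + (2 : F)*p*p + (-1 : F)*p*p*p) • (x * t * x * (y * y - ((p - 1) • y + p • (1 : A))) * x)
      + ((-1 : F) + (2 : F)*p + (-2 : F)*p*p + (2 : F)*p*p*p + (-1 : F)*p*p*p*p) • (y * x * t * (y * y - ((p - 1) • y + p • (1 : A))))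
      + ((-1 : F) + (2 : F)*p + (-2 : F)*p*p + (1 : F)*p*p*p) • (y * x * t * (y * y - ((p - 1) • y + p • (1 : A))) * x)
      + ((1 : F) + (-2 : F)*p + (2 : F)*p*p + (-2 : F)*p*p*p + (1 : F)*p*p*p*p) • (y * t * x * (y * y - ((p - 1) • y + p • (1 : A))))
      + ((1 : F) + (-2 : F)*p + (2 : F)*p*p + (-1 : F)*p*p*p) • (y * t * x * (y * y - ((p - 1) • y + p • (1 : A))) * x)
      + ((-1 : F)*p + (2 : F)*p*p + (-2 : F)*p*p*p + (2 : F)*p*p*p*p + (-1 : F)*p*p*p*p*p) • ((y * y - ((p - 1) • y + p • (1 : A))) * s)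
      + ((-1 : F)*p + (2 : F)*p*p + (-2 : F)*p*p*p + (1 : F)*p*p*p*p) • ((y * y - ((p - 1) • y + p • (1 : A))) * x * s)
      + ((-1 : F)*p + (2 : F)*p*p + (-2 : F)*p*p*p + (1 : F)*p*p*p*p) • ((y * y - ((p - 1) • y + p • (1 : A))) * x * t)
      + ((-1 : F)*p*p + (1 : F)*p*p*p) • ((y * y - ((p - 1) • y + p • (1 : A))) * y * s)
      + ((-1 : F)*p + (1 : F)*p*p + (-1 : F)*p*p*p + (1 : F)*p*p*p*p) • ((y * y - ((p - 1) • y + p • (1 : A))) * s * y)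
      + ((-1 : F)*p + (2 : F)*p*p + (-1 : F)*p*p*p) • ((y * y - ((p - 1) • y + p • (1 : A))) * x * y * t)
      + ((-1 : F)*p + (1 : F)*p*p + (-1 : F)*p*p*p) • ((y * y - ((p - 1) • y + p • (1 : A))) * x * t * x)
      + ((-1 : F)*p + (1 : F)*p*p + (-1 : F)*p*p*p) • ((y * y - ((p - 1) • y + p • (1 : A))) * y * x * t)
      + ((-1 : F)*p*p) • (x * (y * y - ((p - 1) • y + p • (1 : A))) * y * s)
      + ((-1 : F)*p + (1 : F)*p*p) • (x * (y * y - ((p - 1) • y + p • (1 : A))) * x * y * t) := by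
    simp only [mul_add, add_mul, mul_sub, sub_mul, smul_mul_assoc, mul_smul_comm, smul_add,
      smul_sub, smul_smul, mul_one, one_mul, mul_assoc]
    all_goals module
  have zero : (p * p * (p - 1) * (p - 1)) • (s * (x * y + y * x - (p - 1) • x - (p - 1) • y + (p * p - p + 1) • (1 : A)) - t * (x * y + y * x - (p - 1) • x - (p - 1) • y + (p * p - p + 1) • (1 : A))) = 0 := by
    rw [cert]
    simp only [z1, z2, z3, z4, z5, z6, z7, mul_zero, zero_mul, smul_zero, add_zero, zero_add]
  have diff : (s * (x * y + y * x - (p - 1) • x - (p - 1) • y + (p * p - p + 1) • (1 : A)) - t * (x * y + y * x - (p - 1) • x - (p - 1) • y + (p * p - p + 1) • (1 : A))) = 0 := by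
    have h2' := congrArg (fun z => (p * p * (p - 1) * (p - 1))⁻¹ • z) zero
    simp only [smul_smul, smul_zero, inv_mul_cancel₀ hD, one_smul] at h2'
    exact h2'
  exact sub_eq_zero.mp diff

set_option maxHeartbeats 4000000 in
lemma statement7_gen_key₂ {F : Type} [Field F] {A : Type} [Ring A] [Algebra F A]
    (p : F) (x y s t : A)
    (h1 : x * s = s * x) (h2 : y * t = t * y)
    (h3 : x * y * s = t * (x * y)) (h4 : y * x * t = s * (y * x))
    (h5 : x * x = (p - 1) • x + p • (1 : A)) (h6 : y * y = (p - 1) • y + p • (1 : A))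
    (h7 : x * y * x = y * x * y) (hp : p ≠ 0) (hp1 : p - 1 ≠ 0) :
    t * (x * y + y * x - (p - 1) • x - (p - 1) • y + (p * p - p + 1) • (1 : A))
      = (x * y + y * x - (p - 1) • x - (p - 1) • y + (p * p - p + 1) • (1 : A)) * t := by
  have z1 : x * s - s * x = (0 : A) := sub_eq_zero.mpr h1
  have z2 : y * t - t * y = (0 : A) := sub_eq_zero.mpr h2
  have z3 : x * y * s - t * (x * y) = (0 : A) := sub_eq_zero.mpr h3
  have z4 : y * x * t - s * (y * x) = (0 : A) := sub_eq_zero.mpr h4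
  have z5 : x * x - ((p - 1) • x + p • (1 : A)) = (0 : A) := sub_eq_zero.mpr h5
  have z6 : y * y - ((p - 1) • y + p • (1 : A)) = (0 : A) := sub_eq_zero.mpr h6
  have z7 : x * y * x - y * x * y = (0 : A) := sub_eq_zero.mpr h7
  have hD : (p * (p - 1)) ≠ 0 := mul_ne_zero hp hp1
  have cert : (p * (p - 1)) • (t * (x * y + y * x - (p - 1) • x - (p - 1) • y + (p * p - p + 1) • (1 : A)) - (x * y + y * x - (p - 1) • x - (p - 1) • y + (p * p - p + 1) • (1 : A)) * t) =
      ((1 : F)*p + (-2 : F)*p*p + (1 : F)*p*p*p) • ((y * t - t * y))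
      + ((1 : F)*p + (-1 : F)*p*p) • ((y * t - t * y) * x)
      + ((1 : F) + (-2 : F)*p + (1 : F)*p*p) • ((y * t - t * y) * x * y)
      + ((1 : F) + (-1 : F)*p) • ((y * t - t * y) * y * x * y)
      + ((1 : F) + (-1 : F)*p) • (y * (y * t - t * y) * x * y)
      + ((1 : F) + (-2 : F)*p + (1 : F)*p*p) • (y * x * (y * t - t * y))
      + ((1 : F) + (-1 : F)*p) • (y * y * x * (y * t - t * y))
      + ((1 : F) + (-3 : F)*p + (3 : F)*p*p + (-1 : F)*p*p*p) • ((x * y * s - t * (x * y)))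
      + ((1 : F) + (-2 : F)*p + (1 : F)*p*p) • ((x * y * s - t * (x * y)) * y)
      + ((1 : F) + (-2 : F)*p + (1 : F)*p*p) • (x * (x * y * s - t * (x * y)))
      + ((1 : F) + (-1 : F)*p) • (x * (x * y * s - t * (x * y)) * y)
      + ((2 : F) + (-4 : F)*p + (2 : F)*p*p) • (y * (x * y * s - t * (x * y)))
      + ((1 : F) + (-1 : F)*p) • (y * (x * y * s - t * (x * y)) * y)
      + ((2 : F) + (-2 : F)*p) • (y * x * (x * y * s - t * (x * y)))
      + ((1 : F)) • (y * x * (x * y * s - t * (x * y)) * y)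
      + ((1 : F) + (-1 : F)*p) • (y * y * (x * y * s - t * (x * y)))
      + ((1 : F)) • (y * y * x * (x * y * s - t * (x * y)))
      + ((1 : F) + (-3 : F)*p + (3 : F)*p*p + (-1 : F)*p*p*p) • ((y * x * t - s * (y * x)))
      + ((1 : F) + (-2 : F)*p + (1 : F)*p*p) • ((y * x * t - s * (y * x)) * x)
      + ((2 : F) + (-4 : F)*p + (2 : F)*p*p) • ((y * x * t - s * (y * x)) * y)
      + ((2 : F) + (-2 : F)*p) • ((y * x * t - s * (y * x)) * x * y)
      + ((1 : F) + (-1 : F)*p) • ((y * x * t - s * (y * x)) * y * y)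
      + ((1 : F)) • ((y * x * t - s * (y * x)) * x * y * y)
      + ((1 : F) + (-2 : F)*p + (1 : F)*p*p) • (y * (y * x * t - s * (y * x)))
      + ((1 : F) + (-1 : F)*p) • (y * (y * x * t - s * (y * x)) * x)
      + ((1 : F) + (-1 : F)*p) • (y * (y * x * t - s * (y * x)) * y)
      + ((1 : F)) • (y * (y * x * t - s * (y * x)) * x * y)
      + ((1 : F) + (-2 : F)*p + (1 : F)*p*p) • (s * y * (x * x - ((p - 1) • x + p • (1 : A))))
      + ((2 : F) + (-2 : F)*p) • (s * y * (x * x - ((p - 1) • x + p • (1 : A))) * y)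
      + ((1 : F)) • (s * y * (x * x - ((p - 1) • x + p • (1 : A))) * y * y)
      + ((1 : F) + (-1 : F)*p) • (y * s * y * (x * x - ((p - 1) • x + p • (1 : A))))
      + ((1 : F)) • (y * s * y * (x * x - ((p - 1) • x + p • (1 : A))) * y)
      + ((-1 : F) + (2 : F)*p + (-1 : F)*p*p) • ((x * x - ((p - 1) • x + p • (1 : A))) * y * s)
      + ((-1 : F) + (1 : F)*p) • ((x * x - ((p - 1) • x + p • (1 : A))) * y * s * y)
      + ((-2 : F) + (2 : F)*p) • (y * (x * x - ((p - 1) • x + p • (1 : A))) * y * s)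
      + ((-1 : F)) • (y * (x * x - ((p - 1) • x + p • (1 : A))) * y * s * y)
      + ((-1 : F)) • (y * y * (x * x - ((p - 1) • x + p • (1 : A))) * y * s)
      + ((1 : F)*p + (-1 : F)*p*p) • (s * (y * y - ((p - 1) • y + p • (1 : A))))
      + ((1 : F)*p) • (s * (y * y - ((p - 1) • y + p • (1 : A))) * y)
      + ((1 : F) + (-1 : F)*p) • (t * (y * y - ((p - 1) • y + p • (1 : A))) * x * y)
      + ((1 : F)*p) • (y * s * (y * y - ((p - 1) • y + p • (1 : A))))
      + ((1 : F) + (-2 : F)*p + (1 : F)*p*p) • (t * x * (y * y - ((p - 1) • y + p • (1 : A))))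
      + ((1 : F) + (-1 : F)*p) • (x * t * x * (y * y - ((p - 1) • y + p • (1 : A))))
      + ((-1 : F) + (1 : F)*p) • (y * x * t * (y * y - ((p - 1) • y + p • (1 : A))))
      + ((1 : F) + (-1 : F)*p) • (y * t * x * (y * y - ((p - 1) • y + p • (1 : A))))
      + ((-1 : F)*p + (1 : F)*p*p) • ((y * y - ((p - 1) • y + p • (1 : A))) * s)
      + ((-1 : F) + (2 : F)*p + (-1 : F)*p*p) • ((y * y - ((p - 1) • y + p • (1 : A))) * x * t)
      + ((-1 : F)*p) • ((y * y - ((p - 1) • y + p • (1 : A))) * y * s)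
      + ((-1 : F)*p) • ((y * y - ((p - 1) • y + p • (1 : A))) * s * y)
      + ((-1 : F) + (1 : F)*p) • ((y * y - ((p - 1) • y + p • (1 : A))) * x * y * t)
      + ((-1 : F) + (1 : F)*p) • ((y * y - ((p - 1) • y + p • (1 : A))) * x * t * x) := by
    simp only [mul_add, add_mul, mul_sub, sub_mul, smul_mul_assoc, mul_smul_comm, smul_add,
      smul_sub, smul_smul, mul_one, one_mul, mul_assoc]
    all_goals module
  have zero : (p * (p - 1)) • (t * (x * y + y * x - (p - 1) • x - (p - 1) • y + (p * p - p + 1) • (1 : A)) - (x * y + y * x - (p - 1) • x - (p - 1) • y + (p * p - p + 1) • (1 : A)) * t) = 0 := by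
    rw [cert]
    simp only [z1, z2, z3, z4, z5, z6, z7, mul_zero, zero_mul, smul_zero, add_zero, zero_add]
  have diff : (t * (x * y + y * x - (p - 1) • x - (p - 1) • y + (p * p - p + 1) • (1 : A)) - (x * y + y * x - (p - 1) • x - (p - 1) • y + (p * p - p + 1) • (1 : A)) * t) = 0 := by
    have h2' := congrArg (fun z => (p * (p - 1))⁻¹ • z) zero
    simp only [smul_smul, smul_zero, inv_mul_cancel₀ hD, one_smul] at h2'
    exact h2'
  exact sub_eq_zero.mp diff

/-- For `|i-j| = 1` and `a ≥ 1`, in `H(SB_n)`: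
`τ_i^a (σ_iσ_j + σ_jσ_i − (q−1)σ_i − (q−1)σ_j + (q²−q+1))
  = τ_j^a (σ_iσ_j + σ_jσ_i − (q−1)σ_i − (q−1)σ_j + (q²−q+1))`. -/
theorem statement7 (n : ℕ) (hn : 3 ≤ n) (i j : Fin (n - 1)) (hij : adj i j)
    (a : ℕ) (ha : 1 ≤ a) :
    τH i ^ a * (σH i * σH j + σH j * σH i - cK (q - 1) * σH i - cK (q - 1) * σH j
        + cK (q ^ 2 - q + 1))
      = τH j ^ a * (σH i * σH j + σH j * σH i - cK (q - 1) * σH i - cK (q - 1) * σH j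
        + cK (q ^ 2 - q + 1)) := by
  have con_rel : ∀ {u v : FreeMonoid (SBGen n)}, SBRel n u v →
      ((SBcon n).mk' u : SB n) = (SBcon n).mk' v :=
    fun h => (Con.eq _).mpr (ConGen.Rel.of _ _ h)
  have relmul : ∀ α β : SB n, ιH (α * β) = ιH α * ιH β := fun α β => by
    unfold ιH
    rw [map_mul, map_mul]; rfl
  have m1 : sσ i * sτ i = sτ i * sσ i := by
    exact con_rel (SBRel.sigma_tau i)
  have m2 : sσ j * sτ j = sτ j * sσ j := by
    exact con_rel (SBRel.sigma_tau j)
  have m3 : sσ i * sσ j * sτ i = sτ j * sσ i * sσ j := by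
    exact con_rel (SBRel.braid_tau i j hij)
  have m4 : sσ j * sσ i * sτ j = sτ i * sσ j * sσ i := by
    exact con_rel (SBRel.braid_tau j i (Or.symm hij))
  have m7 : sσ i * sσ j * sσ i = sσ j * sσ i * sσ j := by
    exact con_rel (SBRel.braid i j hij)
  have r1 : σH i * τH i = τH i * σH i := by
    simp only [σH, τH]
    simp only [← relmul]
    exact congrArg ιH m1
  have r2 : σH j * τH j = τH j * σH j := by
    simp only [σH, τH]
    simp only [← relmul]
    exact congrArg ιH m2
  have r3 : σH i * σH j * τH i = τH j * (σH i * σH j) := by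
    simp only [σH, τH]
    simp only [← relmul]
    exact congrArg ιH (m3.trans (mul_assoc _ _ _))
  have r4 : σH j * σH i * τH j = τH i * (σH j * σH i) := by
    simp only [σH, τH]
    simp only [← relmul]
    exact congrArg ιH (m4.trans (mul_assoc _ _ _))
  have r7 : σH i * σH j * σH i = σH j * σH i * σH j := by
    simp only [σH, τH]
    simp only [← relmul]
    exact congrArg ιH m7
  have r5 : σH i * σH i = (q - 1) • σH i + q • (1 : H n) := by
    have hw : hrel n ((MonoidAlgebra.of K (SB n) (sσ i)) ^ 2)
        ((q - 1) • MonoidAlgebra.of K (SB n) (sσ i) + q • 1) := ⟨i, rfl, rfl⟩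
    have h := RingQuot.mkAlgHom_rel K hw
    simp only [map_pow, pow_two, map_mul, map_add, map_smul, map_one] at h
    simp only [σH, ιH]; exact h
  have r6 : σH j * σH j = (q - 1) • σH j + q • (1 : H n) := by
    have hw : hrel n ((MonoidAlgebra.of K (SB n) (sσ j)) ^ 2)
        ((q - 1) • MonoidAlgebra.of K (SB n) (sσ j) + q • 1) := ⟨j, rfl, rfl⟩
    have h := RingQuot.mkAlgHom_rel K hw
    simp only [map_pow, pow_two, map_mul, map_add, map_smul, map_one] at h
    simp only [σH, ιH]; exact h
  have hp : (q : K) ≠ 0 := RatFunc.X_ne_zero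
  have hp1 : (q : K) - 1 ≠ 0 := by
    have hq : (q : K) - 1 = algebraMap (Polynomial ℂ) K (Polynomial.X - 1) := by
      simp [q, map_sub, RatFunc.algebraMap_X]
    rw [hq, map_ne_zero_iff _ (IsFractionRing.injective (Polynomial ℂ) K)]
    simpa using Polynomial.X_sub_C_ne_zero (1 : ℂ)
  have key1 := statement7_gen_key₁ q (σH i) (σH j) (τH i) (τH j) r1 r2 r3 r4 r5 r6 r7 hp hp1
  have key2 := statement7_gen_key₂ q (σH i) (σH j) (τH i) (τH j) r1 r2 r3 r4 r5 r6 r7 hp hp1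
  have hEconv : σH i * σH j + σH j * σH i - cK (q - 1) * σH i - cK (q - 1) * σH j
      + cK (q ^ 2 - q + 1)
      = σH i * σH j + σH j * σH i - (q - 1) • σH i - (q - 1) • σH j
      + (q * q - q + 1) • (1 : H n) := by
    simp only [cK, Algebra.smul_def, mul_one, pow_two]
  rw [hEconv]
  set e : H n := σH i * σH j + σH j * σH i - (q - 1) • σH i - (q - 1) • σH j
      + (q * q - q + 1) • (1 : H n) with he
  have hcomm : ∀ k : ℕ, τH j ^ k * e = e * τH j ^ k := fun k => Commute.pow_left key2 k
  obtain ⟨m, rfl⟩ : ∃ m, a = m + 1 := ⟨a - 1, by omega⟩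
  have main : ∀ k : ℕ, τH i ^ (k + 1) * e = τH j ^ (k + 1) * e := by
    intro k
    induction k with
    | zero => simpa using key1
    | succ k ih =>
      calc τH i ^ (k + 1 + 1) * e = τH i * (τH i ^ (k + 1) * e) := by
            rw [pow_succ' (τH i) (k + 1), mul_assoc]
        _ = τH i * (e * τH j ^ (k + 1)) := by rw [ih, hcomm]
        _ = τH i * e * τH j ^ (k + 1) := by rw [mul_assoc]
        _ = τH j * e * τH j ^ (k + 1) := by rw [key1]
        _ = τH j * (τH j ^ (k + 1) * e) := by rw [mul_assoc, ← hcomm (k + 1)]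
        _ = τH j ^ (k + 1 + 1) * e := by rw [← mul_assoc, ← pow_succ']
  exact main m
end
end

section
/- Let n ≥ 3, let i, j ∈ {1,…,n−1} with |i−j| = 1, and let a ≥ 1. Then in the singular Hecke algebra H(SB_n): σ_i τ_j^a = q^{−1} τ_j^a σ_iσ_jσ_i − q^{−1} τ_i^a σ_iσ_jσ_i + τ_j^a σ_i. -/
noncomputable section
open scoped Classical

section Statement8Aux

variable {n : ℕ}

lemma ιH_mul (α β : SB n) : ιH (α * β) = ιH α * ιH β := by
  unfold ιH
  rw [map_mul, map_mul]
  rfl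

lemma ιH_pow (β : SB n) (a : ℕ) : ιH (β ^ a) = ιH β ^ a := by
  unfold ιH
  rw [map_pow, map_pow]
  rfl

lemma SB_rel {w₁ w₂ : FreeMonoid (SBGen n)} (h : SBRel n w₁ w₂) :
    (SBcon n).mk' w₁ = (SBcon n).mk' w₂ :=
  (Con.eq _).mpr (ConGen.Rel.of _ _ h)

lemma SB_braid (i j : Fin (n - 1)) (h : adj i j) :
    sσ i * sσ j * sσ i = sσ j * sσ i * sσ j := by
  have := SB_rel (SBRel.braid i j h)
  simp only [map_mul] at this
  exact this

lemma SB_braid_tau (i j : Fin (n - 1)) (h : adj i j) :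
    sσ i * sσ j * sτ i = sτ j * (sσ i * sσ j) := by
  have := SB_rel (SBRel.braid_tau i j h)
  simp only [map_mul] at this
  rw [← mul_assoc]
  exact this

lemma SB_sigma_tau (i : Fin (n - 1)) : sσ i * sτ i = sτ i * sσ i := by
  have := SB_rel (SBRel.sigma_tau i)
  simp only [map_mul] at this
  exact this

lemma SB_braid_tau_pow (i j : Fin (n - 1)) (h : adj i j) (a : ℕ) :
    sσ i * sσ j * sτ i ^ a = sτ j ^ a * (sσ i * sσ j) := by
  induction a with
  | zero => simp
  | succ a ih =>
    calc sσ i * sσ j * sτ i ^ (a + 1)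
        = (sσ i * sσ j * sτ i ^ a) * sτ i := by rw [pow_succ]; simp only [mul_assoc]
      _ = sτ j ^ a * (sσ i * sσ j * sτ i) := by rw [ih, mul_assoc]
      _ = sτ j ^ a * (sτ j * (sσ i * sσ j)) := by rw [SB_braid_tau i j h]
      _ = sτ j ^ (a + 1) * (sσ i * sσ j) := by rw [pow_succ]; simp only [mul_assoc]

lemma Hquad (k : Fin (n - 1)) :
    σH k * σH k = (q - 1) • σH k + q • (1 : H n) := by
  have hr : hrel n ((MonoidAlgebra.of K (SB n) (sσ k)) ^ 2)
      ((q - 1) • MonoidAlgebra.of K (SB n) (sσ k) + q • 1) := ⟨k, rfl, rfl⟩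
  have h := RingQuot.mkAlgHom_rel K hr
  simp only [map_add, map_smul, map_pow, map_one, map_mul, pow_two] at h
  exact h

lemma adj_symm {i j : Fin (n - 1)} (h : adj i j) : adj j i := h.symm

lemma q_ne_zero : q ≠ 0 := RatFunc.X_ne_zero

lemma q_sub_one_ne_zero : q - 1 ≠ 0 := by
  rw [sub_ne_zero]
  intro h
  have h' : (RatFunc.X : RatFunc ℂ) = 1 := h
  have h1 := congrArg RatFunc.num h'
  rw [RatFunc.num_X, RatFunc.num_one] at h1
  have h2 := congrArg Polynomial.natDegree h1
  simp at h2

end Statement8Aux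

/-- For `|i-j| = 1` and `a ≥ 1`, in `H(SB_n)`:
`σ_i τ_j^a = q⁻¹ τ_j^a σ_iσ_jσ_i − q⁻¹ τ_i^a σ_iσ_jσ_i + τ_j^a σ_i`. -/
theorem statement8 (n : ℕ) (hn : 3 ≤ n) (i j : Fin (n - 1)) (hij : adj i j)
    (a : ℕ) (ha : 1 ≤ a) :
    σH i * τH j ^ a
      = cK q⁻¹ * (τH j ^ a * (σH i * σH j * σH i))
        - cK q⁻¹ * (τH i ^ a * (σH i * σH j * σH i)) + τH j ^ a * σH i := by
  have hA : σH (n := n) i * σH i = (q - 1) • σH i + q • (1 : H n) := Hquad i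
  have hB : σH (n := n) j * σH j = (q - 1) • σH j + q • (1 : H n) := Hquad j
  have hbr : σH (n := n) i * σH j * σH i = σH j * σH i * σH j := by
    have := congrArg ιH (SB_braid i j hij)
    simpa only [ιH_mul, σH] using this
  have h1 : σH (n := n) i * σH j * τH i ^ a = τH j ^ a * (σH i * σH j) := by
    have := congrArg ιH (SB_braid_tau_pow i j hij a)
    simpa only [ιH_mul, ιH_pow, σH, τH] using this
  have h2 : σH (n := n) j * σH i * τH j ^ a = τH i ^ a * (σH j * σH i) := by
    have := congrArg ιH (SB_braid_tau_pow j i (adj_symm hij) a)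
    simpa only [ιH_mul, ιH_pow, σH, τH] using this
  have hst : σH (n := n) j * τH j = τH j * σH j := by
    have := congrArg ιH (SB_sigma_tau (n := n) j)
    simpa only [ιH_mul, σH, τH] using this
  have h3 : σH (n := n) j * τH j ^ a = τH j ^ a * σH j :=
    (Commute.pow_right (show Commute (σH (n := n) j) (τH j) from hst) a).eq
  have eq3 : σH (n := n) i * (σH j * (σH i * τH j ^ a))
      = τH i ^ a * (σH i * (σH j * σH i)) := by
    calc σH (n := n) i * (σH j * (σH i * τH j ^ a))
        = σH i * σH j * σH i * τH j ^ a := by simp only [mul_assoc]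
      _ = σH j * σH i * σH j * τH j ^ a := by rw [hbr]
      _ = σH j * σH i * (σH j * τH j ^ a) := by simp only [mul_assoc]
      _ = σH j * σH i * (τH j ^ a * σH j) := by rw [h3]
      _ = σH j * σH i * τH j ^ a * σH j := by simp only [mul_assoc]
      _ = τH i ^ a * (σH j * σH i) * σH j := by rw [h2]
      _ = τH i ^ a * (σH j * σH i * σH j) := by simp only [mul_assoc]
      _ = τH i ^ a * (σH i * σH j * σH i) := by rw [← hbr]
      _ = τH i ^ a * (σH i * (σH j * σH i)) := by simp only [mul_assoc]
  have eq1 : σH (n := n) i * σH j * τH i ^ a * (σH j * σH i)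
      = (q - 1) • (τH j ^ a * (σH i * (σH j * σH i)))
        + ((q * (q - 1)) • (τH j ^ a * σH i) + (q * q) • τH j ^ a) := by
    calc σH (n := n) i * σH j * τH i ^ a * (σH j * σH i)
        = τH j ^ a * (σH i * σH j) * (σH j * σH i) := by rw [h1]
      _ = τH j ^ a * (σH i * (σH j * σH j * σH i)) := by simp only [mul_assoc]
      _ = τH j ^ a * (σH i * (((q - 1) • σH j + q • (1 : H n)) * σH i)) := by rw [hB]
      _ = (q - 1) • (τH j ^ a * (σH i * (σH j * σH i)))
          + q • (τH j ^ a * (σH i * σH i)) := by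
          simp only [add_mul, smul_mul_assoc, one_mul, mul_add, mul_smul_comm, smul_add]
      _ = (q - 1) • (τH j ^ a * (σH i * (σH j * σH i)))
          + q • (τH j ^ a * ((q - 1) • σH i + q • (1 : H n))) := by rw [hA]
      _ = _ := by
          simp only [mul_add, mul_smul_comm, smul_add, smul_smul, mul_one]
  have eq2 : σH (n := n) i * σH j * τH i ^ a * (σH j * σH i)
      = (q - 1) • (τH i ^ a * (σH i * (σH j * σH i)))
        + ((q * (q - 1)) • (σH i * τH j ^ a) + (q * q) • τH j ^ a) := by
    calc σH (n := n) i * σH j * τH i ^ a * (σH j * σH i)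
        = σH i * σH j * (τH i ^ a * (σH j * σH i)) := by simp only [mul_assoc]
      _ = σH i * σH j * (σH j * σH i * τH j ^ a) := by rw [← h2]
      _ = σH i * (σH j * σH j * (σH i * τH j ^ a)) := by simp only [mul_assoc]
      _ = σH i * (((q - 1) • σH j + q • (1 : H n)) * (σH i * τH j ^ a)) := by rw [hB]
      _ = (q - 1) • (σH i * (σH j * (σH i * τH j ^ a)))
          + q • (σH i * (σH i * τH j ^ a)) := by
          simp only [add_mul, smul_mul_assoc, one_mul, mul_add, mul_smul_comm, smul_add]
      _ = (q - 1) • (τH i ^ a * (σH i * (σH j * σH i)))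
          + q • (σH i * (σH i * τH j ^ a)) := by rw [eq3]
      _ = (q - 1) • (τH i ^ a * (σH i * (σH j * σH i)))
          + q • (σH i * σH i * τH j ^ a) := by
          rw [mul_assoc (σH (n := n) i) (σH i) (τH j ^ a)]
      _ = (q - 1) • (τH i ^ a * (σH i * (σH j * σH i)))
          + q • (((q - 1) • σH i + q • (1 : H n)) * τH j ^ a) := by rw [hA]
      _ = _ := by
          simp only [add_mul, smul_mul_assoc, one_mul, smul_add, smul_smul]
  have keyeq := eq1.symm.trans eq2
  rw [← add_assoc, ← add_assoc] at keyeq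
  have keyeq3 := add_right_cancel keyeq
  have hc : q * (q - 1) ≠ 0 := mul_ne_zero q_ne_zero q_sub_one_ne_zero
  have keyeq4 : (q * (q - 1)) • (σH (n := n) i * τH j ^ a)
      = (q - 1) • (τH j ^ a * (σH i * (σH j * σH i)))
        + (q * (q - 1)) • (τH j ^ a * σH i)
        - (q - 1) • (τH i ^ a * (σH i * (σH j * σH i))) := by
    rw [eq_sub_iff_add_eq, add_comm ((q * (q - 1)) • (σH (n := n) i * τH j ^ a))]
    exact keyeq3.symm
  have expand : σH (n := n) i * τH j ^ a
      = (q * (q - 1))⁻¹ • ((q * (q - 1)) • (σH (n := n) i * τH j ^ a)) := by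
    rw [smul_smul, inv_mul_cancel₀ hc, one_smul]
  simp only [cK]
  rw [← Algebra.smul_def, ← Algebra.smul_def]
  rw [expand, keyeq4]
  simp only [smul_add, smul_sub, smul_smul]
  rw [show (q * (q - 1))⁻¹ * (q - 1) = q⁻¹ by
        field_simp
        rw [div_mul_cancel_right₀ q_sub_one_ne_zero, one_div],
      show (q * (q - 1))⁻¹ * (q * (q - 1)) = 1 from inv_mul_cancel₀ hc, one_smul]
  simp only [← mul_assoc]
  abel
end
end

section
/- Let n ≥ 3, let i, j ∈ {1,…,n−1} with |i−j| = 1, and let a ≥ 1. Then in the singular Hecke algebra H(SB_n): σ_j τ_i^a = τ_j^a (σ_i + σ_j − (q−1)) − τ_i^a (σ_i − (q−1)). -/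
noncomputable section
open scoped Classical

section Aux9
variable {n : ℕ}

lemma sσ_mul_sσi (i : Fin (n-1)) : sσ i * sσi i = 1 := by
  have h := SB_rel (SBRel.inv_right (n := n) i)
  simp only [map_mul, map_one] at h
  exact h

lemma sσ_mul_sτ (i : Fin (n-1)) : sσ i * sτ i = sτ i * sσ i := by
  have h := SB_rel (SBRel.sigma_tau (n := n) i)
  simp only [map_mul] at h
  exact h

lemma braid_tau_SB {i j : Fin (n-1)} (h : adj i j) :
    sσ i * (sσ j * sτ i) = sτ j * (sσ i * sσ j) := by
  have h' := SB_rel (SBRel.braid_tau (n := n) i j h)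
  simp only [map_mul] at h'
  rw [← mul_assoc, ← mul_assoc]
  exact h'

lemma ιH_one : ιH (1 : SB n) = 1 := by simp only [ιH, map_one]; rfl

/-- inverse of σ in H -/
def σHi {n : ℕ} (i : Fin (n-1)) : H n := ιH (sσi i)

lemma σH_mul_σHi (i : Fin (n-1)) : σH i * σHi i = (1 : H n) := by
  rw [σH, σHi, ← ιH_mul, sσ_mul_sσi, ιH_one]

lemma σH_mul_τH (i : Fin (n-1)) : σH i * τH i = τH i * σH i := by
  rw [σH, τH, ← ιH_mul, ← ιH_mul, sσ_mul_sτ]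

lemma braid_tau_H {i j : Fin (n-1)} (h : adj i j) :
    σH i * (σH j * τH i) = τH j * (σH i * σH j) := by
  rw [σH, σH, τH, τH, ← ιH_mul, ← ιH_mul, ← ιH_mul, ← ιH_mul, braid_tau_SB h]

lemma heckeH (i : Fin (n-1)) : σH i * σH i = (q-1) • σH i + q • (1 : H n) := by
  have h : hrel n ((MonoidAlgebra.of K (SB n) (sσ i)) ^ 2)
      ((q - 1) • MonoidAlgebra.of K (SB n) (sσ i) + q • 1) := ⟨i, rfl, rfl⟩
  have h2 := RingQuot.mkAlgHom_rel K h
  simp only [map_add, map_pow, map_smul, map_one, pow_two] at h2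
  rw [map_mul] at h2
  rw [σH, ιH, MonoidAlgebra.of_apply]
  exact h2

end Aux9
lemma qm1_ne_zero : (q : K) - 1 ≠ 0 := by
  rw [sub_ne_zero]
  intro h
  have := congrArg (RatFunc.eval (RingHom.id ℂ) 0) h
  simp [q, RatFunc.eval_one, RatFunc.eval_X] at this

lemma cancel_σH {n : ℕ} (j : Fin (n-1)) {x y : H n} (h : x * σH j = y * σH j) : x = y := by
  have h' := congrArg (· * σHi j) h
  simpa only [mul_assoc, σH_mul_σHi, mul_one] using h'

lemma Aprime {n : ℕ} {i j : Fin (n-1)} (hij : adj i j) :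
    σH i * (τH j * σH i)
      = (q-1) • (τH j * σH i) + σH j * (τH i * σH j) - (q-1) • (σH j * τH i) := by
  have h3 := braid_tau_H hij
  apply cancel_σH j
  calc σH i * (τH j * σH i) * σH j
      = σH i * (τH j * (σH i * σH j)) := by simp only [mul_assoc]
    _ = σH i * (σH i * (σH j * τH i)) := by rw [← h3]
    _ = ((q-1) • σH i + q • 1) * (σH j * τH i) := by rw [← mul_assoc, heckeH]
    _ = (q-1) • (σH i * (σH j * τH i)) + q • (σH j * τH i) := by
        simp only [add_mul, smul_mul_assoc, one_mul]
    _ = (q-1) • (τH j * (σH i * σH j)) + q • (σH j * τH i) := by rw [h3]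
    _ = ((q-1) • (τH j * σH i) + σH j * (τH i * σH j) - (q-1) • (σH j * τH i)) * σH j := by
        simp only [sub_mul, add_mul, smul_mul_assoc, mul_assoc]
        rw [heckeH]
        simp only [mul_add, mul_smul_comm, mul_one]
        abel

lemma symmS {n : ℕ} {i j : Fin (n-1)} (hij : adj i j) :
    τH j * σH i + τH i * σH j = σH i * τH j + σH j * τH i := by
  have A := Aprime hij
  have B := Aprime hij.symm
  rw [B] at A
  -- A : si*(tj*si) = (q-1)•(tj*si) + ((q-1)•(ti*sj) + si*(tj*si) - (q-1)•(si*tj)) - (q-1)•(sj*ti)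
  refine (IsUnit.smul_left_cancel (isUnit_iff_ne_zero.mpr qm1_ne_zero)).mp ?_
  calc (q-1) • (τH j * σH i + τH i * σH j)
      = ((q-1) • (τH j * σH i)
          + ((q-1) • (τH i * σH j) + σH i * (τH j * σH i) - (q-1) • (σH i * τH j))
          - (q-1) • (σH j * τH i))
        - σH i * (τH j * σH i) + ((q-1) • (σH i * τH j) + (q-1) • (σH j * τH i)) := by
        simp only [smul_add]; abel
    _ = σH i * (τH j * σH i)
        - σH i * (τH j * σH i) + ((q-1) • (σH i * τH j) + (q-1) • (σH j * τH i)) := by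
        rw [← A]
    _ = (q-1) • (σH i * τH j + σH j * τH i) := by simp only [smul_add]; abel

lemma base9 {n : ℕ} {i j : Fin (n-1)} (hij : adj i j) :
    σH j * τH i
      = τH j * (σH i + σH j - (q-1) • 1) - τH i * (σH i - (q-1) • 1) := by
  have h3 := braid_tau_H hij
  have S := symmS hij
  have S1 : τH j * σH i = σH i * τH j + σH j * τH i - τH i * σH j := by
    rw [← S]; abel
  have hS1 : σH i * (τH j * σH i)
      = σH i * (σH i * τH j) + σH i * (σH j * τH i) - σH i * (τH i * σH j) := by
    rw [S1]; simp only [mul_add, mul_sub]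
  have hkey : σH i * (σH i * τH j) = (q-1) • (σH i * τH j) + q • τH j := by
    rw [← mul_assoc, heckeH]
    simp only [add_mul, smul_mul_assoc, one_mul]
  have hkeyj : τH j * (σH j * σH j) = (q-1) • (τH j * σH j) + q • τH j := by
    rw [heckeH]
    simp only [mul_add, mul_smul_comm, mul_one]
  have hcomm : τH i * (σH i * σH j) = σH i * (τH i * σH j) := by
    rw [← mul_assoc, ← σH_mul_τH, mul_assoc]
  apply cancel_σH j
  calc σH j * τH i * σH j
      = σH j * (τH i * σH j) := by rw [mul_assoc]
    _ = (q-1) • (τH i * σH j) + σH i * (τH j * σH i) - (q-1) • (σH i * τH j) :=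
        Aprime hij.symm
    _ = (q-1) • (τH i * σH j)
        + (((q-1) • (σH i * τH j) + q • τH j) + σH i * (σH j * τH i)
            - σH i * (τH i * σH j))
        - (q-1) • (σH i * τH j) := by rw [hS1, hkey]
    _ = τH j * (σH i * σH j) + τH j * (σH j * σH j) - (q-1) • (τH j * σH j)
        - τH i * (σH i * σH j) + (q-1) • (τH i * σH j) := by
        rw [← h3, hkeyj, hcomm]; abel
    _ = (τH j * (σH i + σH j - (q-1) • 1) - τH i * (σH i - (q-1) • 1)) * σH j := by
        simp only [mul_add, mul_sub, sub_mul, add_mul, mul_one, mul_smul_comm,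
          smul_mul_assoc, one_mul, mul_assoc]
        abel
/-- For `|i-j| = 1` and `a ≥ 1`, in `H(SB_n)`:
`σ_j τ_i^a = τ_j^a (σ_i + σ_j − (q−1)) − τ_i^a (σ_i − (q−1))`. -/
theorem statement9 (n : ℕ) (hn : 3 ≤ n) (i j : Fin (n - 1)) (hij : adj i j)
    (a : ℕ) (ha : 1 ≤ a) :
    σH j * τH i ^ a
      = τH j ^ a * (σH i + σH j - cK (q - 1)) - τH i ^ a * (σH i - cK (q - 1)) := by
  have halg : (cK (q - 1) : H n) = (q-1) • (1 : H n) := Algebra.algebraMap_eq_smul_one _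
  rw [halg]
  have base := base9 hij
  induction a, ha using Nat.le_induction with
  | base => simpa using base
  | succ a ha IH =>
    have e1 : (σH i + σH j - (q-1) • (1 : H n)) * τH i
        = τH j * (σH i + σH j - (q-1) • 1) := by
      simp only [sub_mul, add_mul, smul_mul_assoc, one_mul]
      rw [σH_mul_τH, base]
      simp only [mul_sub, mul_add, mul_smul_comm, mul_one]
      abel
    have e2 : (σH i - (q-1) • (1 : H n)) * τH i = τH i * (σH i - (q-1) • 1) := by
      simp only [sub_mul, smul_mul_assoc, one_mul, mul_sub, mul_smul_comm, mul_one]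
      rw [σH_mul_τH]
    calc σH j * τH i ^ (a+1)
        = σH j * τH i ^ a * τH i := by rw [pow_succ, mul_assoc]
      _ = (τH j ^ a * (σH i + σH j - (q-1) • 1) - τH i ^ a * (σH i - (q-1) • 1)) * τH i := by
          rw [IH]
      _ = τH j ^ a * ((σH i + σH j - (q-1) • 1) * τH i)
          - τH i ^ a * ((σH i - (q-1) • 1) * τH i) := by
          simp only [sub_mul, mul_assoc]
      _ = τH j ^ a * (τH j * (σH i + σH j - (q-1) • 1))
          - τH i ^ a * (τH i * (σH i - (q-1) • 1)) := by rw [e1, e2]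
      _ = τH j ^ (a+1) * (σH i + σH j - (q-1) • 1)
          - τH i ^ (a+1) * (σH i - (q-1) • 1) := by
          rw [pow_succ, pow_succ, mul_assoc, mul_assoc]
end
end
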